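/- Let m ≥ 1, h > 0, and let X be a 2m×2m real symplectic matrix, written in m×m blocks as X = [[X₁₁, X₁₂],[X₂₁, X₂₂]], such that X₁₁ is invertible. Define C̃ = h⁻¹(X₁₁⁻¹ − I_m)ᵀ, Ã = h⁻¹X₂₁X₁₁⁻¹ and D̃ = −h⁻¹X₁₁⁻¹X₁₂. Then Ãᵀ = Ã, D̃ᵀ = D̃, I_m + hC̃ᵀ = X₁₁⁻¹ (in particular I_m + hC̃ᵀ is invertible), and X = S_h(Ã, C̃, D̃); in particular X₂₂ = −h²Ã(I_m + hC̃ᵀ)⁻¹D̃ + I_m + hC̃. -/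

import Mathlib

open Matrix

/-- The standard symplectic matrix `J = [[0, -I_m],[I_m, 0]]` in `m × m` blocks. -/
def Jmat (m : ℕ) : Matrix (Fin m ⊕ Fin m) (Fin m ⊕ Fin m) ℝ :=
  Matrix.fromBlocks 0 (-1) 1 0

/-- A `2m × 2m` real matrix `M` is symplectic iff `Mᵀ * J * M = J`. -/
def IsSymplectic {m : ℕ} (M : Matrix (Fin m ⊕ Fin m) (Fin m ⊕ Fin m) ℝ) : Prop :=
  Mᵀ * Jmat m * M = Jmat m

/-- The matrix `S_h(A,C,D)` with blocks
`[[(I+hCᵀ)⁻¹, −h(I+hCᵀ)⁻¹D],[hA(I+hCᵀ)⁻¹, −h²A(I+hCᵀ)⁻¹D + I + hC]]`. -/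
noncomputable def Sh (m : ℕ) (h : ℝ) (A C D : Matrix (Fin m) (Fin m) ℝ) :
    Matrix (Fin m ⊕ Fin m) (Fin m ⊕ Fin m) ℝ :=
  Matrix.fromBlocks (1 + h • Cᵀ)⁻¹ (-(h • ((1 + h • Cᵀ)⁻¹ * D)))
    (h • (A * (1 + h • Cᵀ)⁻¹)) (-((h ^ 2) • (A * (1 + h • Cᵀ)⁻¹ * D)) + 1 + h • C)

/-- any symplectic matrix `X` with invertible upper-left block is of the
form `S_h(Ã, C̃, D̃)` with `Ã, D̃` symmetric. -/
theorem stmt1 (m : ℕ) (hm : 1 ≤ m) (h : ℝ) (hh : 0 < h)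
    (X11 X12 X21 X22 : Matrix (Fin m) (Fin m) ℝ)
    (hsymp : IsSymplectic (Matrix.fromBlocks X11 X12 X21 X22))
    (hX11 : IsUnit X11)
    (Atil Ctil Dtil : Matrix (Fin m) (Fin m) ℝ)
    (hCtil : Ctil = h⁻¹ • (X11⁻¹ - 1)ᵀ)
    (hAtil : Atil = h⁻¹ • (X21 * X11⁻¹))
    (hDtil : Dtil = -(h⁻¹ • (X11⁻¹ * X12))) :
    Atilᵀ = Atil ∧ Dtilᵀ = Dtil ∧
    (1 + h • Ctilᵀ = X11⁻¹ ∧ IsUnit (1 + h • Ctilᵀ)) ∧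
    Matrix.fromBlocks X11 X12 X21 X22 = Sh m h Atil Ctil Dtil ∧
    X22 = -((h ^ 2) • (Atil * (1 + h • Ctilᵀ)⁻¹ * Dtil)) + 1 + h • Ctil := by
  have hne : h ≠ 0 := ne_of_gt hh
  have hd : IsUnit X11.det := (Matrix.isUnit_iff_isUnit_det X11).mp hX11
  have hinv1 : X11 * X11⁻¹ = 1 := Matrix.mul_nonsing_inv _ hd
  have hinv2 : X11⁻¹ * X11 = 1 := Matrix.nonsing_inv_mul _ hd
  have hII : (X11⁻¹)⁻¹ = X11 := Matrix.nonsing_inv_nonsing_inv _ hd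
  have hT1 : (X11⁻¹)ᵀ * X11ᵀ = 1 := by
    rw [← Matrix.transpose_mul, hinv1, Matrix.transpose_one]
  have hT2 : X11ᵀ * (X11⁻¹)ᵀ = 1 := by
    rw [← Matrix.transpose_mul, hinv2, Matrix.transpose_one]
  -- unpack symplectic relations
  have hs := hsymp
  unfold IsSymplectic Jmat at hs
  rw [Matrix.fromBlocks_transpose, Matrix.fromBlocks_multiply,
    Matrix.fromBlocks_multiply] at hs
  have e1 : X21ᵀ * X11 = X11ᵀ * X21 := by
    have := congrArg Matrix.toBlocks₁₁ hs
    simp [Matrix.toBlocks_fromBlocks₁₁, Matrix.mul_one, Matrix.mul_zero] at this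
    linear_combination (norm := noncomm_ring) this
  have e2 : X11ᵀ * X22 = 1 + X21ᵀ * X12 := by
    have := congrArg Matrix.toBlocks₁₂ hs
    simp [Matrix.toBlocks_fromBlocks₁₂] at this
    linear_combination (norm := noncomm_ring) -this
  have e4 : X22ᵀ * X12 = X12ᵀ * X22 := by
    have := congrArg Matrix.toBlocks₂₂ hs
    simp [Matrix.toBlocks_fromBlocks₂₂] at this
    linear_combination (norm := noncomm_ring) this
  -- key symmetry relation
  have hS1 : X21 * X11⁻¹ = (X11⁻¹)ᵀ * X21ᵀ := by
    calc X21 * X11⁻¹ = ((X11⁻¹)ᵀ * X11ᵀ) * (X21 * X11⁻¹) := by rw [hT1, one_mul]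
      _ = (X11⁻¹)ᵀ * (X11ᵀ * X21) * X11⁻¹ := by noncomm_ring
      _ = (X11⁻¹)ᵀ * (X21ᵀ * X11) * X11⁻¹ := by rw [e1]
      _ = (X11⁻¹)ᵀ * X21ᵀ * (X11 * X11⁻¹) := by noncomm_ring
      _ = (X11⁻¹)ᵀ * X21ᵀ := by rw [hinv1, mul_one]
  have hX22 : X22 = (X11⁻¹)ᵀ + X21 * X11⁻¹ * X12 := by
    calc X22 = ((X11⁻¹)ᵀ * X11ᵀ) * X22 := by rw [hT1, one_mul]
      _ = (X11⁻¹)ᵀ * (X11ᵀ * X22) := by rw [mul_assoc]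
      _ = (X11⁻¹)ᵀ * (1 + X21ᵀ * X12) := by rw [e2]
      _ = (X11⁻¹)ᵀ + ((X11⁻¹)ᵀ * X21ᵀ) * X12 := by noncomm_ring
      _ = (X11⁻¹)ᵀ + X21 * X11⁻¹ * X12 := by rw [← hS1]
  have hS2 : (X11⁻¹ * X12)ᵀ = X11⁻¹ * X12 := by
    have hX22T : X22ᵀ = X11⁻¹ + X12ᵀ * (X21 * X11⁻¹) := by
      rw [hX22, hS1]
      simp only [Matrix.transpose_add, Matrix.transpose_mul, Matrix.transpose_transpose,
        mul_assoc]
      rw [hS1]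
    have h4 : (X11⁻¹ + X12ᵀ * (X21 * X11⁻¹)) * X12
        = X12ᵀ * ((X11⁻¹)ᵀ + X21 * X11⁻¹ * X12) := by
      rw [← hX22T, ← hX22]; exact e4
    have h5 : X11⁻¹ * X12 + X12ᵀ * (X21 * X11⁻¹ * X12)
        = X12ᵀ * (X11⁻¹)ᵀ + X12ᵀ * (X21 * X11⁻¹ * X12) := by
      linear_combination (norm := noncomm_ring) h4
    have h6 : X11⁻¹ * X12 = X12ᵀ * (X11⁻¹)ᵀ := by
      linear_combination (norm := noncomm_ring) h5
    rw [Matrix.transpose_mul, ← h6]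
  -- C tilde
  have hC' : 1 + h • Ctilᵀ = X11⁻¹ := by
    rw [hCtil, Matrix.transpose_smul, Matrix.transpose_transpose, smul_smul,
      mul_inv_cancel₀ hne, one_smul]
    abel
  have hCunit : IsUnit (1 + h • Ctilᵀ) := by
    rw [hC', Matrix.isUnit_iff_isUnit_det, Matrix.det_nonsing_inv]
    exact isUnit_ringInverse.mpr hd
  have hCinv : (1 + h • Ctilᵀ)⁻¹ = X11 := by rw [hC', hII]
  have hAX : Atil * X11 = h⁻¹ • X21 := by
    rw [hAtil, smul_mul_assoc, mul_assoc, hinv2, mul_one]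
  have h1hC : (1 : Matrix (Fin m) (Fin m) ℝ) + h • Ctil = (X11⁻¹)ᵀ := by
    rw [hCtil, smul_smul, mul_inv_cancel₀ hne, one_smul, Matrix.transpose_sub,
      Matrix.transpose_one]
    abel
  have hsc : h ^ 2 * (h⁻¹ * h⁻¹) = 1 := by field_simp
  have hT : Atil * (1 + h • Ctilᵀ)⁻¹ * Dtil
      = -((h⁻¹ * h⁻¹) • (X21 * (X11⁻¹ * X12))) := by
    rw [hCinv, hAX, hDtil]
    simp [smul_mul_assoc, mul_smul_comm, smul_smul, mul_assoc]
  have hBR : -((h ^ 2) • (Atil * (1 + h • Ctilᵀ)⁻¹ * Dtil)) + 1 + h • Ctil = X22 := by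
    rw [hT, hX22, smul_neg, neg_neg, smul_smul, hsc, one_smul, add_assoc, h1hC,
      mul_assoc]
    abel
  refine ⟨?_, ?_, ⟨hC', hCunit⟩, ?_, hBR.symm⟩
  · rw [hAtil, Matrix.transpose_smul, Matrix.transpose_mul, ← hS1]
  · rw [hDtil, Matrix.transpose_neg, Matrix.transpose_smul, hS2]
  · unfold Sh
    rw [hCinv, Matrix.fromBlocks_inj]
    refine ⟨rfl, ?_, ?_, ?_⟩
    · rw [hDtil, Matrix.mul_neg, smul_neg, neg_neg, mul_smul_comm, smul_smul,
        mul_inv_cancel₀ hne, one_smul, ← mul_assoc, hinv1, one_mul]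
    · rw [hAX, smul_smul, mul_inv_cancel₀ hne, one_smul]
    · rw [← hCinv]; exact hBR.symm
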